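/- Let (Ω, 𝓕, P) be a probability space, q ∈ [0,1), α ∈ (q−1, 0], K ≥ 0, and let d : (0,∞) → ℝ be measurable with |d(z)| ≤ K(1 + z^α) for all z > 0. Let x ∈ ℝ, let (H_T)_{T>0} be a family of random variables with H_T > 0 P-a.s., E[H_T] < ∞, E[H_T^q] < ∞, E[H_T^{1+α}] < ∞ for every T > 0, and sup_{T>0} E[H_T] < ∞, and let (λ_T)_{T>0} be positive reals such that x = E[H_T·d(λ_T H_T)] + λ_T^{q−1}·E[H_T^q] for every T > 0. Then there exists M ∈ ℝ with M ≤ x such that for every T > 0: |E[H_T·d(λ_T H_T)]| ≤ K(E[H_T] + (x − M)^{α/(q−1)}·E[H_T]^{1−α/(q−1)}). -/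

import Mathlib

open MeasureTheory

lemma rpow_holder {Ω : Type*} [MeasurableSpace Ω] (P : Measure Ω)
    (h : Ω → ℝ) (hm : Measurable h) (hpos : ∀ᵐ ω ∂P, 0 < h ω)
    (q θ : ℝ) (hθ0 : 0 < θ) (hθ1 : θ < 1)
    (hInt1 : Integrable h P) (hIntq : Integrable (fun ω => h ω ^ q) P) :
    ∫ ω, h ω ^ (q * θ + (1 - θ)) ∂P ≤ (∫ ω, h ω ^ q ∂P) ^ θ * (∫ ω, h ω ∂P) ^ (1 - θ) := by
  have hθ1' : 0 < 1 - θ := by linarith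
  have hconj : (1/θ).HolderConjugate (1/(1-θ)) := by
    rw [Real.holderConjugate_iff]
    constructor
    · rw [lt_div_iff₀ hθ0]; linarith
    · field_simp; ring
  have humeas : AEStronglyMeasurable (fun ω => h ω ^ q) P :=
    (show Measurable fun ω => h ω ^ q by fun_prop).aestronglyMeasurable
  -- F membership
  have h2 : MemLp (fun ω => h ω ^ q) 1 P := by
    rw [memLp_one_iff_integrable]; exact hIntq
  have h3 := (memLp_norm_rpow_iff (q := ENNReal.ofReal θ) (p := 1) humeas
      (by simp only [ne_eq, ENNReal.ofReal_eq_zero, not_le]; linarith) (by simp)).mpr h2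
  rw [show (1 : ENNReal) / ENNReal.ofReal θ = ENNReal.ofReal (1/θ) by
    rw [ENNReal.ofReal_div_of_pos hθ0, ENNReal.ofReal_one]] at h3
  have hF : MemLp (fun ω => (h ω ^ q) ^ θ) (ENNReal.ofReal (1/θ)) P := by
    refine (memLp_congr_ae ?_).mp h3
    filter_upwards [hpos] with ω hω
    rw [ENNReal.toReal_ofReal hθ0.le,
      Real.norm_of_nonneg (Real.rpow_nonneg hω.le q)]
  -- G membership
  have h4 : MemLp h 1 P := by
    rw [memLp_one_iff_integrable]; exact hInt1
  have h5 := (memLp_norm_rpow_iff (q := ENNReal.ofReal (1-θ)) (p := 1) hm.aestronglyMeasurable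
      (by simp only [ne_eq, ENNReal.ofReal_eq_zero, not_le]; linarith) (by simp)).mpr h4
  rw [show (1 : ENNReal) / ENNReal.ofReal (1-θ) = ENNReal.ofReal (1/(1-θ)) by
    rw [ENNReal.ofReal_div_of_pos hθ1', ENNReal.ofReal_one]] at h5
  have hG : MemLp (fun ω => h ω ^ (1-θ)) (ENNReal.ofReal (1/(1-θ))) P := by
    refine (memLp_congr_ae ?_).mp h5
    filter_upwards [hpos] with ω hω
    rw [ENNReal.toReal_ofReal hθ1'.le, Real.norm_of_nonneg hω.le]
  have key := integral_mul_le_Lp_mul_Lq_of_nonneg hconj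
    (f := fun ω => (h ω ^ q) ^ θ) (g := fun ω => h ω ^ (1 - θ))
    (by filter_upwards [hpos] with ω hω; positivity)
    (by filter_upwards [hpos] with ω hω; positivity) hF hG
  have eL : ∫ ω, h ω ^ (q * θ + (1 - θ)) ∂P
      = ∫ ω, (h ω ^ q) ^ θ * h ω ^ (1 - θ) ∂P := by
    refine integral_congr_ae ?_
    filter_upwards [hpos] with ω hω
    rw [← Real.rpow_mul hω.le, ← Real.rpow_add hω]
  have eR1 : ∫ ω, ((h ω ^ q) ^ θ) ^ θ⁻¹ ∂P = ∫ ω, h ω ^ q ∂P := by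
    refine integral_congr_ae ?_
    filter_upwards [hpos] with ω hω
    rw [← Real.rpow_mul (Real.rpow_nonneg hω.le q), mul_inv_cancel₀ hθ0.ne', Real.rpow_one]
  have eR2 : ∫ ω, (h ω ^ (1-θ)) ^ (1-θ)⁻¹ ∂P = ∫ ω, h ω ∂P := by
    refine integral_congr_ae ?_
    filter_upwards [hpos] with ω hω
    rw [← Real.rpow_mul hω.le, mul_inv_cancel₀ hθ1'.ne', Real.rpow_one]
  simp only [one_div, inv_inv] at key
  rw [eL, ← eR1, ← eR2]
  exact key

/-- Sublinear self-bound implies a bound. -/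
lemma sublinear_bound {y A B θ : ℝ} (hy0 : 0 ≤ y) (hθ0 : 0 ≤ θ) (hθ1 : θ < 1)
    (hA : 1 ≤ A) (hB : 0 ≤ B) (hy : y ≤ A + B * y ^ θ) :
    y ≤ (A + B) ^ (1 / (1 - θ)) := by
  have hθ1' : 0 < 1 - θ := by linarith
  have hAB1 : 1 ≤ A + B := by linarith
  by_cases hy1 : y ≤ 1
  · exact hy1.trans (Real.one_le_rpow hAB1 (by positivity))
  · push_neg at hy1
    have hypos : 0 < y := by linarith
    have h1θ : 1 ≤ y ^ θ := Real.one_le_rpow hy1.le hθ0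
    have step1 : y ≤ (A + B) * y ^ θ := by nlinarith
    have hyθpos : 0 < y ^ θ := Real.rpow_pos_of_pos hypos θ
    have step2 : y ^ (1 - θ) ≤ A + B := by
      have : y ^ (1 - θ) * y ^ θ ≤ (A + B) * y ^ θ := by
        rw [← Real.rpow_add hypos, sub_add_cancel, Real.rpow_one]
        exact step1
      exact le_of_mul_le_mul_right this hyθpos
    calc y = (y ^ (1 - θ)) ^ (1 / (1 - θ)) := by
            rw [← Real.rpow_mul hy0, mul_one_div_cancel hθ1'.ne', Real.rpow_one]
      _ ≤ (A + B) ^ (1 / (1 - θ)) :=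
            Real.rpow_le_rpow (Real.rpow_nonneg hy0 _) step2 (by positivity)

/-- Proposition 3.2: a finite lower bound `M ≤ x` exists, independent of the horizon `T`,
such that `|E[H_T·d(λ_T H_T)]| ≤ K(E[H_T] + (x-M)^{α/(q-1)} E[H_T]^{1-α/(q-1)})` for all
`T > 0`. -/
theorem turnpike_uniform_d_bound
    {Ω : Type*} [MeasurableSpace Ω] (P : Measure Ω) [IsProbabilityMeasure P]
    (q α : ℝ) (hq0 : 0 ≤ q) (hq1 : q < 1) (hα1 : q - 1 < α) (hα2 : α ≤ 0)
    (K : ℝ) (hK : 0 ≤ K)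
    (d : ℝ → ℝ) (hdmeas : Measurable d)
    (hd : ∀ z : ℝ, 0 < z → |d z| ≤ K * (1 + z ^ α))
    (x : ℝ)
    (H : ℝ → Ω → ℝ) (lam : ℝ → ℝ)
    (hHmeas : ∀ T : ℝ, 0 < T → Measurable (H T))
    (hHpos : ∀ T : ℝ, 0 < T → ∀ᵐ ω ∂P, 0 < H T ω)
    (hInt1 : ∀ T : ℝ, 0 < T → Integrable (H T) P)
    (hIntq : ∀ T : ℝ, 0 < T → Integrable (fun ω => H T ω ^ q) P)
    (hIntα : ∀ T : ℝ, 0 < T → Integrable (fun ω => H T ω ^ (1 + α)) P)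
    (hsup : ∃ Csup : ℝ, ∀ T : ℝ, 0 < T → ∫ ω, H T ω ∂P ≤ Csup)
    (hlam : ∀ T : ℝ, 0 < T → 0 < lam T)
    (hbudget : ∀ T : ℝ, 0 < T →
      x = (∫ ω, H T ω * d (lam T * H T ω) ∂P) + lam T ^ (q - 1) * ∫ ω, H T ω ^ q ∂P) :
    ∃ M : ℝ, M ≤ x ∧ ∀ T : ℝ, 0 < T →
      |∫ ω, H T ω * d (lam T * H T ω) ∂P| ≤
        K * ((∫ ω, H T ω ∂P) +
          (x - M) ^ (α / (q - 1)) * (∫ ω, H T ω ∂P) ^ (1 - α / (q - 1))) := by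
  obtain ⟨Csup, hCs⟩ := hsup
  set θ := α / (q - 1) with hθdef
  have hq1' : q - 1 < 0 := by linarith
  have hθmul : θ * (q - 1) = α := div_mul_cancel₀ α hq1'.ne
  have hθ0 : 0 ≤ θ := by
    rw [hθdef, div_nonneg_iff]; right; exact ⟨hα2, hq1'.le⟩
  have hθ1 : θ < 1 := by nlinarith
  -- the per-horizon key estimate
  have key : ∀ T : ℝ, 0 < T →
      0 ≤ x - ∫ ω, H T ω * d (lam T * H T ω) ∂P ∧
      |∫ ω, H T ω * d (lam T * H T ω) ∂P| ≤
        K * ((∫ ω, H T ω ∂P) +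
          (x - ∫ ω, H T ω * d (lam T * H T ω) ∂P) ^ θ * (∫ ω, H T ω ∂P) ^ (1 - θ)) := by
    intro T hT
    have hpos := hHpos T hT
    have hl := hlam T hT
    have hI0 : 0 ≤ ∫ ω, H T ω ∂P :=
      integral_nonneg_of_ae (hpos.mono fun ω hω => hω.le)
    have hIq0 : 0 ≤ ∫ ω, H T ω ^ q ∂P :=
      integral_nonneg_of_ae (hpos.mono fun ω hω => (Real.rpow_nonneg hω.le q))
    have hlq0 : 0 ≤ lam T ^ (q - 1) * ∫ ω, H T ω ^ q ∂P :=
      mul_nonneg (Real.rpow_nonneg hl.le _) hIq0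
    have hy0 : 0 ≤ x - ∫ ω, H T ω * d (lam T * H T ω) ∂P := by
      have hb := hbudget T hT
      linarith
    refine ⟨hy0, ?_⟩
    -- pointwise bound
    have hb : ∀ᵐ ω ∂P, |H T ω * d (lam T * H T ω)| ≤
        K * (H T ω + lam T ^ α * H T ω ^ (1 + α)) := by
      filter_upwards [hpos] with ω hω
      have hlh : 0 < lam T * H T ω := mul_pos hl hω
      calc |H T ω * d (lam T * H T ω)| = H T ω * |d (lam T * H T ω)| := by
            rw [abs_mul, abs_of_pos hω]
        _ ≤ H T ω * (K * (1 + (lam T * H T ω) ^ α)) :=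
            mul_le_mul_of_nonneg_left (hd _ hlh) hω.le
        _ = K * (H T ω + lam T ^ α * H T ω ^ (1 + α)) := by
            rw [Real.mul_rpow hl.le hω.le, Real.rpow_add hω 1 α, Real.rpow_one]; ring
    have hIntb : Integrable (fun ω => K * (H T ω + lam T ^ α * H T ω ^ (1 + α))) P :=
      (((hInt1 T hT).add ((hIntα T hT).const_mul _)).const_mul K)
    have hIntf : Integrable (fun ω => H T ω * d (lam T * H T ω)) P := by
      refine hIntb.mono' ?_ ?_
      · exact ((hHmeas T hT).mul
          (hdmeas.comp (measurable_const.mul (hHmeas T hT)))).aestronglyMeasurable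
      · simpa [Real.norm_eq_abs, abs_mul] using hb
    have habs : |∫ ω, H T ω * d (lam T * H T ω) ∂P| ≤
        K * ((∫ ω, H T ω ∂P) + lam T ^ α * ∫ ω, H T ω ^ (1 + α) ∂P) := by
      calc |∫ ω, H T ω * d (lam T * H T ω) ∂P|
          ≤ ∫ ω, |H T ω * d (lam T * H T ω)| ∂P := by
            simpa only [Real.norm_eq_abs] using
              norm_integral_le_integral_norm (fun ω => H T ω * d (lam T * H T ω)) (μ := P)
        _ ≤ ∫ ω, K * (H T ω + lam T ^ α * H T ω ^ (1 + α)) ∂P :=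
            integral_mono_ae hIntf.abs hIntb hb
        _ = K * ((∫ ω, H T ω ∂P) + lam T ^ α * ∫ ω, H T ω ^ (1 + α) ∂P) := by
            rw [integral_const_mul, integral_add (hInt1 T hT) ((hIntα T hT).const_mul _),
              integral_const_mul]
    -- Hölder step
    have hHolder : ∫ ω, H T ω ^ (1 + α) ∂P ≤
        (∫ ω, H T ω ^ q ∂P) ^ θ * (∫ ω, H T ω ∂P) ^ (1 - θ) := by
      rcases eq_or_lt_of_le hθ0 with hθz | hθp
      · have hα0 : α = 0 := by rw [← hθmul, ← hθz]; ring
        simp only [← hθz, hα0, add_zero, Real.rpow_zero, Real.rpow_one, sub_zero, one_mul]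
        exact le_of_eq (integral_congr_ae (Filter.Eventually.of_forall fun ω => rfl))
      · have hexp : (1 : ℝ) + α = q * θ + (1 - θ) := by linear_combination -hθmul
        rw [hexp]
        exact rpow_holder P (H T) (hHmeas T hT) hpos q θ hθp hθ1 (hInt1 T hT) (hIntq T hT)
    -- replace l^α * Iα
    have hsubst : lam T ^ α * ∫ ω, H T ω ^ (1 + α) ∂P ≤
        (x - ∫ ω, H T ω * d (lam T * H T ω) ∂P) ^ θ * (∫ ω, H T ω ∂P) ^ (1 - θ) := by
      have hlα : lam T ^ α = (lam T ^ (q - 1)) ^ θ := by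
        rw [← hθmul, mul_comm, Real.rpow_mul hl.le]
      have h1 : lam T ^ α * ∫ ω, H T ω ^ (1 + α) ∂P ≤
          lam T ^ α * ((∫ ω, H T ω ^ q ∂P) ^ θ * (∫ ω, H T ω ∂P) ^ (1 - θ)) :=
        mul_le_mul_of_nonneg_left hHolder (Real.rpow_nonneg hl.le _)
      have h2 : lam T ^ α * ((∫ ω, H T ω ^ q ∂P) ^ θ * (∫ ω, H T ω ∂P) ^ (1 - θ)) =
          (lam T ^ (q - 1) * ∫ ω, H T ω ^ q ∂P) ^ θ * (∫ ω, H T ω ∂P) ^ (1 - θ) := by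
        rw [hlα, Real.mul_rpow (Real.rpow_nonneg hl.le _) hIq0, mul_assoc]
      have h3 : lam T ^ (q - 1) * ∫ ω, H T ω ^ q ∂P =
          x - ∫ ω, H T ω * d (lam T * H T ω) ∂P := by
        have hb := hbudget T hT; linarith
      rw [h2, h3] at h1
      exact h1
    calc |∫ ω, H T ω * d (lam T * H T ω) ∂P|
        ≤ K * ((∫ ω, H T ω ∂P) + lam T ^ α * ∫ ω, H T ω ^ (1 + α) ∂P) := habs
      _ ≤ K * ((∫ ω, H T ω ∂P) +
          (x - ∫ ω, H T ω * d (lam T * H T ω) ∂P) ^ θ * (∫ ω, H T ω ∂P) ^ (1 - θ)) := by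
          apply mul_le_mul_of_nonneg_left _ hK
          exact add_le_add_right hsubst _
  -- global constants
  set C := max Csup 1 with hCdef
  have hC1 : (1 : ℝ) ≤ C := le_max_right _ _
  have hC0 : (0 : ℝ) ≤ C := by linarith
  set A := |x| + K * C + 1 with hAdef
  set B := K * C ^ (1 - θ) with hBdef
  have hA1 : 1 ≤ A := by
    have h1 := abs_nonneg x
    have h2 : 0 ≤ K * C := mul_nonneg hK hC0
    rw [hAdef]; linarith
  have hB0 : 0 ≤ B := by positivity
  set R := (A + B) ^ (1 / (1 - θ)) with hRdef
  have hR0 : 0 ≤ R := Real.rpow_nonneg (by linarith) _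
  refine ⟨x - R, by linarith, ?_⟩
  intro T hT
  obtain ⟨hy0, hbnd⟩ := key T hT
  have hI0 : 0 ≤ ∫ ω, H T ω ∂P :=
    integral_nonneg_of_ae ((hHpos T hT).mono fun ω hω => hω.le)
  have hIC : ∫ ω, H T ω ∂P ≤ C := (hCs T hT).trans (le_max_left _ _)
  have hICθ : (∫ ω, H T ω ∂P) ^ (1 - θ) ≤ C ^ (1 - θ) :=
    Real.rpow_le_rpow hI0 hIC (by linarith)
  have hyθ0 : 0 ≤ (x - ∫ ω, H T ω * d (lam T * H T ω) ∂P) ^ θ :=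
    Real.rpow_nonneg hy0 _
  -- y ≤ A + B y^θ
  have hy : x - ∫ ω, H T ω * d (lam T * H T ω) ∂P ≤
      A + B * (x - ∫ ω, H T ω * d (lam T * H T ω) ∂P) ^ θ := by
    have h1 : x - ∫ ω, H T ω * d (lam T * H T ω) ∂P ≤
        x + |∫ ω, H T ω * d (lam T * H T ω) ∂P| := by
      have := abs_nonneg (∫ ω, H T ω * d (lam T * H T ω) ∂P)
      have := neg_abs_le (∫ ω, H T ω * d (lam T * H T ω) ∂P)
      linarith
    have h2 : K * ((∫ ω, H T ω ∂P) +
        (x - ∫ ω, H T ω * d (lam T * H T ω) ∂P) ^ θ * (∫ ω, H T ω ∂P) ^ (1 - θ)) ≤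
        K * C + B * (x - ∫ ω, H T ω * d (lam T * H T ω) ∂P) ^ θ := by
      have h3 : (x - ∫ ω, H T ω * d (lam T * H T ω) ∂P) ^ θ * (∫ ω, H T ω ∂P) ^ (1 - θ) ≤
          (x - ∫ ω, H T ω * d (lam T * H T ω) ∂P) ^ θ * C ^ (1 - θ) :=
        mul_le_mul_of_nonneg_left hICθ hyθ0
      nlinarith [mul_le_mul_of_nonneg_left (add_le_add hIC h3) hK]
    have h4 := le_abs_self x
    linarith
  have hyR : x - ∫ ω, H T ω * d (lam T * H T ω) ∂P ≤ R :=
    sublinear_bound hy0 hθ0 hθ1 hA1 hB0 hy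
  -- conclude
  have hxM : x - (x - R) = R := by ring
  rw [hxM]
  have hmono : (x - ∫ ω, H T ω * d (lam T * H T ω) ∂P) ^ θ ≤ R ^ θ :=
    Real.rpow_le_rpow hy0 hyR hθ0
  refine hbnd.trans ?_
  apply mul_le_mul_of_nonneg_left _ hK
  apply add_le_add_right
  exact mul_le_mul_of_nonneg_right hmono (Real.rpow_nonneg hI0 _)
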